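/- Under the singular-B setup below, assume in addition that the eigenvalues of Â are pairwise distinct and fix an eigendecomposition Â = O^Â Λ^Â (O^Â)ᵀ with O^Â ∈ ℝ^{m×m} orthogonal. Then (X, Xᵀ A X) is an equilibrium of the GEV Lagrangian (i.e. A X = B X (Xᵀ A X) and Xᵀ B X = I_r) if and only if there exist an r-element index set I ⊆ {1,…,m} and an orthogonal matrix Ψ ∈ ℝ^{r×r} such that X = O^B · [Λ₁₁^{-1/2} O^Â_{:,I} ; −W₂₂^{-1} W₂₁ Λ₁₁^{-1/2} O^Â_{:,I}] · Ψ, where the bracket denotes the d×r matrix with top block in ℝ^{m×r} and bottom block in ℝ^{(d−m)×r}. -/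

import Mathlib

open Matrix

/-- **Theorem B.2.** Singular-`B` setup as in Statement 13, with an
eigendecomposition `Â = O^Â Λ^Â (O^Â)ᵀ` whose eigenvalues are pairwise distinct.
Then `(X, Xᵀ A X)` is an equilibrium of the GEV Lagrangian
(`A X = B X (Xᵀ A X)` and `Xᵀ B X = I_r`) if and only if
`X = O^B [Λ₁₁^{-1/2} O^Â_{:,I}; −W₂₂⁻¹ W₂₁ Λ₁₁^{-1/2} O^Â_{:,I}] Ψ` for some
`r`-element index set `I ⊆ {1,…,m}` (encoded by an injection `e : Fin r ↪ Fin m`)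
and some orthogonal `Ψ`.  The ambient index set `{1,…,d}` is encoded as
`Fin m ⊕ Fin (d − m)`. -/
lemma gev_reduced {m r : ℕ}
    (Ohat : Matrix (Fin m) (Fin m) ℝ) (hOhat : Ohatᵀ * Ohat = 1)
    (ν : Fin m → ℝ) (hν : Function.Injective ν)
    (Ahat : Matrix (Fin m) (Fin m) ℝ)
    (hAhatdec : Ahat = Ohat * diagonal ν * Ohatᵀ)
    (Z : Matrix (Fin m) (Fin r) ℝ) :
    (Ahat * Z = Z * (Zᵀ * Ahat * Z) ∧ Zᵀ * Z = 1) ↔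
      ∃ (e : Fin r ↪ Fin m) (Ψ : Matrix (Fin r) (Fin r) ℝ), Ψᵀ * Ψ = 1 ∧
        Z = Ohat.submatrix id ⇑e * Ψ := by
  have hOO : Ohat * Ohatᵀ = 1 := mul_eq_one_comm.mp hOhat
  have cOt : ∀ {p : ℕ} (M : Matrix (Fin m) (Fin p) ℝ), Ohatᵀ * (Ohat * M) = M := by
    intro n' M; rw [← Matrix.mul_assoc, hOhat, Matrix.one_mul]
  have cO : ∀ {p : ℕ} (M : Matrix (Fin m) (Fin p) ℝ), Ohat * (Ohatᵀ * M) = M := by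
    intro n' M; rw [← Matrix.mul_assoc, hOO, Matrix.one_mul]
  have hAsym : Ahatᵀ = Ahat := by
    rw [hAhatdec]; simp [Matrix.transpose_mul, Matrix.mul_assoc]
  have hsub : ∀ e : Fin r → Fin m, Function.Injective e →
      (Ohat.submatrix id e)ᵀ * Ohat.submatrix id e = 1 := by
    intro e he
    have h := submatrix_mul Ohatᵀ Ohat e id e Function.bijective_id
    rw [hOhat, submatrix_one e he] at h
    rw [transpose_submatrix]
    exact h.symm
  have hOtOsub : ∀ e : Fin r → Fin m,
      Ohatᵀ * Ohat.submatrix id e = (1 : Matrix (Fin m) (Fin m) ℝ).submatrix id e := by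
    intro e
    have h := submatrix_mul Ohatᵀ Ohat id id e Function.bijective_id
    rw [hOhat] at h
    simpa using h.symm
  have hOmulone : ∀ e : Fin r → Fin m,
      Ohat * (1 : Matrix (Fin m) (Fin m) ℝ).submatrix id e = Ohat.submatrix id e := by
    intro e
    simpa using mul_submatrix_one (Equiv.refl (Fin m)) e Ohat
  have hdiagsub : ∀ e : Fin r → Fin m,
      diagonal ν * (1 : Matrix (Fin m) (Fin m) ℝ).submatrix id e =
        (1 : Matrix (Fin m) (Fin m) ℝ).submatrix id e * diagonal (ν ∘ e) := by
    intro e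
    ext i j
    simp only [diagonal_mul, mul_diagonal, submatrix_apply, id_eq, Function.comp_apply, one_apply]
    by_cases h : i = e j <;> simp [h]
  -- key consequence: Ahat * (O_I * M) = O_I * (diag (ν∘e) * M)
  have hAO : ∀ (e : Fin r → Fin m) {p : ℕ} (M : Matrix (Fin r) (Fin p) ℝ),
      Ahat * (Ohat.submatrix id e * M) =
        Ohat.submatrix id e * (diagonal (ν ∘ e) * M) := by
    intro e p M
    have h1 : Ahat * Ohat.submatrix id e = Ohat.submatrix id e * diagonal (ν ∘ e) := by
      rw [hAhatdec, Matrix.mul_assoc (Ohat * diagonal ν), hOtOsub,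
        Matrix.mul_assoc, hdiagsub, ← Matrix.mul_assoc, hOmulone]
    rw [← Matrix.mul_assoc, h1, Matrix.mul_assoc]
  constructor
  · rintro ⟨h1, h2⟩
    set S := Zᵀ * Ahat * Z with hSdef
    have hSsym : S.IsHermitian := by
      rw [Matrix.IsHermitian, conjTranspose_eq_transpose_of_trivial, hSdef, transpose_mul,
        transpose_mul, transpose_transpose, hAsym, Matrix.mul_assoc]
    set U : Matrix (Fin r) (Fin r) ℝ := (hSsym.eigenvectorUnitary : Matrix (Fin r) (Fin r) ℝ)
      with hUdef
    set ev : Fin r → ℝ := hSsym.eigenvalues with hevdef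
    have hstar : star U = Uᵀ := by
      rw [Matrix.star_eq_conjTranspose, conjTranspose_eq_transpose_of_trivial]
    have hUU : U * Uᵀ = 1 := by
      rw [← hstar]; exact (Matrix.mem_unitaryGroup_iff).mp hSsym.eigenvectorUnitary.2
    have hUtU : Uᵀ * U = 1 := mul_eq_one_comm.mp hUU
    have cU : ∀ {p : ℕ} (M : Matrix (Fin r) (Fin p) ℝ), U * (Uᵀ * M) = M := by
      intro n' M; rw [← Matrix.mul_assoc, hUU, Matrix.one_mul]
    have cUt : ∀ {p : ℕ} (M : Matrix (Fin r) (Fin p) ℝ), Uᵀ * (U * M) = M := by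
      intro n' M; rw [← Matrix.mul_assoc, hUtU, Matrix.one_mul]
    have hspec : S = U * diagonal ev * Uᵀ := by
      have h := hSsym.spectral_theorem
      rwa [Unitary.conjStarAlgAut_apply, hstar, show RCLike.ofReal ∘ ev = ev by ext x; simp] at h
    obtain ⟨Z', hZ'def⟩ : ∃ Z', Z' = Z * U := ⟨_, rfl⟩
    have h1' : Ahat * Z' = Z' * diagonal ev := by
      calc Ahat * Z' = Ahat * Z * U := by rw [hZ'def, Matrix.mul_assoc]
        _ = Z * (U * diagonal ev * Uᵀ) * U := by rw [h1, ← hspec]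
        _ = Z * (U * (diagonal ev * (Uᵀ * U))) := by simp only [Matrix.mul_assoc]
        _ = Z * (U * diagonal ev) := by rw [hUtU, Matrix.mul_one]
        _ = Z' * diagonal ev := by rw [hZ'def, Matrix.mul_assoc]
    have h2' : Z'ᵀ * Z' = 1 := by
      rw [hZ'def, transpose_mul, Matrix.mul_assoc, ← Matrix.mul_assoc Zᵀ, h2,
        Matrix.one_mul, hUtU]
    obtain ⟨W', hW'def⟩ : ∃ W', W' = Ohatᵀ * Z' := ⟨_, rfl⟩
    have horth : W'ᵀ * W' = 1 := by
      rw [hW'def, transpose_mul, transpose_transpose, Matrix.mul_assoc, cO, h2']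
    have hWD : diagonal ν * W' = W' * diagonal ev := by
      have hOA : Ohatᵀ * Ahat = diagonal ν * Ohatᵀ := by
        rw [hAhatdec, ← Matrix.mul_assoc, ← Matrix.mul_assoc, hOhat, Matrix.one_mul]
      calc diagonal ν * W' = diagonal ν * Ohatᵀ * Z' := by rw [hW'def, Matrix.mul_assoc]
        _ = Ohatᵀ * Ahat * Z' := by rw [hOA]
        _ = Ohatᵀ * (Ahat * Z') := by rw [Matrix.mul_assoc]
        _ = Ohatᵀ * (Z' * diagonal ev) := by rw [h1']
        _ = Ohatᵀ * Z' * diagonal ev := by rw [Matrix.mul_assoc]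
        _ = W' * diagonal ev := by rw [hW'def]
    have hkey : ∀ i j, W' i j ≠ 0 → ν i = ev j := by
      intro i j hij
      have h := congrFun (congrFun hWD i) j
      rw [diagonal_mul, mul_diagonal] at h
      exact mul_left_cancel₀ hij (by rw [mul_comm (W' i j) (ν i), h, mul_comm])
    have hcolsum : ∀ j k, ∑ i, W' i j * W' i k = (1 : Matrix (Fin r) (Fin r) ℝ) j k := by
      intro j k
      have h := congrFun (congrFun horth j) k
      rw [mul_apply] at h
      simpa [transpose_apply] using h
    have hexists : ∀ j : Fin r, ∃ i, W' i j ≠ 0 := by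
      intro j
      by_contra h
      push_neg at h
      have h2 := hcolsum j j
      simp only [h, mul_zero, Finset.sum_const_zero, one_apply_eq] at h2
      exact zero_ne_one h2
    choose f hf using hexists
    have hcol : ∀ j i, i ≠ f j → W' i j = 0 := by
      intro j i hij
      by_contra h
      exact hij (hν ((hkey i j h).trans (hkey (f j) j (hf j)).symm))
    set c : Fin r → ℝ := fun j => W' (f j) j with hcdef
    have hc1 : ∀ j, c j * c j = 1 := by
      intro j
      have h := hcolsum j j
      rw [Finset.sum_eq_single (f j)] at h
      · simpa [one_apply_eq] using h
      · intro i _ hi; rw [hcol j i hi, zero_mul]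
      · intro h'; exact absurd (Finset.mem_univ _) h'
    have finj : Function.Injective f := by
      intro j k hjk
      by_contra hne
      have h := hcolsum j k
      rw [Finset.sum_eq_single (f j)] at h
      · rw [one_apply_ne hne] at h
        have hcj : c j ≠ 0 := fun h0 => by simpa [h0] using hc1 j
        have hck : c k ≠ 0 := fun h0 => by simpa [h0] using hc1 k
        rw [hjk] at h
        exact hck ((mul_eq_zero.mp h).resolve_left (hjk ▸ hcj))
      · intro i _ hi
        rw [hcol j i hi, zero_mul]
      · intro h'; exact absurd (Finset.mem_univ _) h'
    have hW'eq : W' = (1 : Matrix (Fin m) (Fin m) ℝ).submatrix id f * diagonal c := by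
      ext i j
      rw [mul_diagonal, submatrix_apply, id_eq]
      by_cases h : i = f j
      · subst h; simp [hcdef]
      · rw [hcol j i h, one_apply_ne h, zero_mul]
    refine ⟨⟨f, finj⟩, diagonal c * Uᵀ, ?_, ?_⟩
    · have hdc : diagonal c * diagonal c = (1 : Matrix (Fin r) (Fin r) ℝ) := by
        rw [diagonal_mul_diagonal, show (fun j => c j * c j) = fun _ => (1 : ℝ) from funext hc1,
          diagonal_one]
      rw [transpose_mul, transpose_transpose, diagonal_transpose, Matrix.mul_assoc,
        ← Matrix.mul_assoc (diagonal c), hdc, Matrix.one_mul, hUU]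
    · have hZZ' : Z = Z' * Uᵀ := by
        rw [hZ'def, Matrix.mul_assoc, hUU, Matrix.mul_one]
      have hZ'O : Z' = Ohat * W' := by rw [hW'def, cO]
      rw [hZZ', hZ'O, hW'eq, ← Matrix.mul_assoc, hOmulone f, Matrix.mul_assoc]
      rfl
  · rintro ⟨e, Ψ, hΨ, rfl⟩
    have hΨΨ : Ψ * Ψᵀ = 1 := mul_eq_one_comm.mp hΨ
    have cΨ : ∀ {p : ℕ} (M : Matrix (Fin r) (Fin p) ℝ), Ψ * (Ψᵀ * M) = M := by
      intro n' M; rw [← Matrix.mul_assoc, hΨΨ, Matrix.one_mul]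
    have csube : ∀ {p : ℕ} (M : Matrix (Fin r) (Fin p) ℝ),
        (Ohat.submatrix id ⇑e)ᵀ * (Ohat.submatrix id ⇑e * M) = M := by
      intro n' M; rw [← Matrix.mul_assoc, hsub ⇑e e.injective, Matrix.one_mul]
    constructor
    · simp only [Matrix.mul_assoc, transpose_mul]
      rw [hAO ⇑e, csube, cΨ]
    · simp only [Matrix.mul_assoc, transpose_mul]
      rw [csube, hΨ]

theorem gev_singular_equilibrium_characterization
    (d r m : ℕ) (hd : 1 ≤ d) (hr : 1 ≤ r) (hrm : r ≤ m) (hmd : m < d)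
    (A B : Matrix (Fin m ⊕ Fin (d - m)) (Fin m ⊕ Fin (d - m)) ℝ)
    (hA : Aᵀ = A) (hAinv : IsUnit A.det) (hB : B.PosSemidef)
    (OB : Matrix (Fin m ⊕ Fin (d - m)) (Fin m ⊕ Fin (d - m)) ℝ)
    (hOB : OBᵀ * OB = 1)
    (μ : Fin m → ℝ) (hμ : ∀ i, 0 < μ i)
    (hBdec : B = OB * Matrix.fromBlocks (diagonal μ) 0 0 0 * OBᵀ)
    (W : Matrix (Fin m ⊕ Fin (d - m)) (Fin m ⊕ Fin (d - m)) ℝ)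
    (hW : W = OBᵀ * A * OB)
    (hW22 : IsUnit W.toBlocks₂₂.det)
    (Ahat : Matrix (Fin m) (Fin m) ℝ)
    (hAhat : Ahat = diagonal (fun i => (Real.sqrt (μ i))⁻¹) *
        (W.toBlocks₁₁ - W.toBlocks₁₂ * W.toBlocks₂₂⁻¹ * W.toBlocks₂₁) *
        diagonal (fun i => (Real.sqrt (μ i))⁻¹))
    (Ohat : Matrix (Fin m) (Fin m) ℝ) (hOhat : Ohatᵀ * Ohat = 1)
    (ν : Fin m → ℝ) (hν : Function.Injective ν)
    (hAhatdec : Ahat = Ohat * diagonal ν * Ohatᵀ)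
    (X : Matrix (Fin m ⊕ Fin (d - m)) (Fin r) ℝ) :
    (A * X = B * X * (Xᵀ * A * X) ∧ Xᵀ * B * X = 1) ↔
      ∃ (e : Fin r ↪ Fin m) (Ψ : Matrix (Fin r) (Fin r) ℝ), Ψᵀ * Ψ = 1 ∧
        X = OB * Matrix.fromRows
            (diagonal (fun i => (Real.sqrt (μ i))⁻¹) * Ohat.submatrix id ⇑e)
            (-(W.toBlocks₂₂⁻¹ * W.toBlocks₂₁ *
                (diagonal (fun i => (Real.sqrt (μ i))⁻¹) * Ohat.submatrix id ⇑e))) * Ψ := by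
  set L : Matrix (Fin m) (Fin m) ℝ := diagonal (fun i => (Real.sqrt (μ i))⁻¹) with hLdef
  set Q : Matrix (Fin m) (Fin m) ℝ := diagonal (fun i => Real.sqrt (μ i)) with hQdef
  set W11 := W.toBlocks₁₁ with hW11def
  set W12 := W.toBlocks₁₂ with hW12def
  set W21 := W.toBlocks₂₁ with hW21def
  set W22 := W.toBlocks₂₂ with hW22def
  set C : Matrix (Fin m) (Fin m) ℝ := W11 - W12 * W22⁻¹ * W21 with hCdef
  have hsqrt_pos : ∀ i, 0 < Real.sqrt (μ i) := fun i => Real.sqrt_pos.mpr (hμ i)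
  have hQt : Qᵀ = Q := diagonal_transpose _
  have cLQ : ∀ {n' : Type} (M : Matrix (Fin m) n' ℝ), L * (Q * M) = M := by
    intro n' M
    rw [← Matrix.mul_assoc, hLdef, hQdef, diagonal_mul_diagonal,
      show (fun i => (Real.sqrt (μ i))⁻¹ * Real.sqrt (μ i)) = fun _ => (1 : ℝ) from
        funext fun i => inv_mul_cancel₀ (hsqrt_pos i).ne', diagonal_one, Matrix.one_mul]
  have cQL : ∀ {n' : Type} (M : Matrix (Fin m) n' ℝ), Q * (L * M) = M := by
    intro n' M
    rw [← Matrix.mul_assoc, hQdef, hLdef, diagonal_mul_diagonal,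
      show (fun i => Real.sqrt (μ i) * (Real.sqrt (μ i))⁻¹) = fun _ => (1 : ℝ) from
        funext fun i => mul_inv_cancel₀ (hsqrt_pos i).ne', diagonal_one, Matrix.one_mul]
  have hQQM : ∀ {n' : Type} (M : Matrix (Fin m) n' ℝ), Q * (Q * M) = diagonal μ * M := by
    intro n' M
    rw [← Matrix.mul_assoc, hQdef, diagonal_mul_diagonal,
      show (fun i => Real.sqrt (μ i) * Real.sqrt (μ i)) = μ from
        funext fun i => Real.mul_self_sqrt (hμ i).le]
  have hLmuQ : ∀ {n' : Type} (M : Matrix (Fin m) n' ℝ), L * (diagonal μ * M) = Q * M := by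
    intro n' M
    rw [← Matrix.mul_assoc, hLdef, diagonal_mul_diagonal,
      show (fun i => (Real.sqrt (μ i))⁻¹ * μ i) = fun i => Real.sqrt (μ i) from
        funext fun i => by
          rw [inv_mul_eq_iff_eq_mul₀ (hsqrt_pos i).ne']
          exact (Real.mul_self_sqrt (hμ i).le).symm, hQdef]
  have hOBO : OB * OBᵀ = 1 := mul_eq_one_comm.mp hOB
  have cOB : ∀ {n' : Type} (M : Matrix (Fin m ⊕ Fin (d - m)) n' ℝ),
      OBᵀ * (OB * M) = M := by
    intro n' M; rw [← Matrix.mul_assoc, hOB, Matrix.one_mul]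
  have cOB' : ∀ {n' : Type} (M : Matrix (Fin m ⊕ Fin (d - m)) n' ℝ),
      OB * (OBᵀ * M) = M := by
    intro n' M; rw [← Matrix.mul_assoc, hOBO, Matrix.one_mul]
  have cW22i : ∀ {n' : Type} (M : Matrix (Fin (d - m)) n' ℝ), W22⁻¹ * (W22 * M) = M := by
    intro n' M; rw [← Matrix.mul_assoc, nonsing_inv_mul _ hW22, Matrix.one_mul]
  have cW22m : ∀ {n' : Type} (M : Matrix (Fin (d - m)) n' ℝ), W22 * (W22⁻¹ * M) = M := by
    intro n' M; rw [← Matrix.mul_assoc, mul_nonsing_inv _ hW22, Matrix.one_mul]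
  have hiff1 : ∀ (M N : Matrix (Fin m ⊕ Fin (d - m)) (Fin r) ℝ),
      OB * M = OB * N ↔ M = N := by
    intro M N
    constructor
    · intro h
      have h2 := congrArg (fun T => OBᵀ * T) h
      simpa only [cOB] using h2
    · intro h; rw [h]
  have hA' : A = OB * (W * OBᵀ) := by
    rw [hW]
    simp only [Matrix.mul_assoc]
    rw [hOBO, Matrix.mul_one, cOB']
  have hB' : B = OB * (Matrix.fromBlocks (diagonal μ) 0 0 0 * OBᵀ) := by
    rw [hBdec, Matrix.mul_assoc]
  have hQAhatQ : ∀ {n' : Type} (M : Matrix (Fin m) n' ℝ),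
      Q * (Ahat * (Q * M)) = C * M := by
    intro n' M
    rw [hAhat]
    simp only [Matrix.mul_assoc]
    rw [cLQ, cQL]
  have hAhatM : ∀ {n' : Type} (M : Matrix (Fin m) n' ℝ),
      Ahat * (Q * M) = L * (C * M) := by
    intro n' M
    rw [hAhat]
    simp only [Matrix.mul_assoc]
    rw [cLQ]
  -- the key block-level equivalence
  have key : ∀ (Y₁ : Matrix (Fin m) (Fin r) ℝ) (Y₂ : Matrix (Fin (d - m)) (Fin r) ℝ),
      (A * (OB * fromRows Y₁ Y₂) =
          B * (OB * fromRows Y₁ Y₂) *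
            ((OB * fromRows Y₁ Y₂)ᵀ * A * (OB * fromRows Y₁ Y₂)) ∧
        (OB * fromRows Y₁ Y₂)ᵀ * B * (OB * fromRows Y₁ Y₂) = 1) ↔
      (Y₂ = -(W22⁻¹ * (W21 * Y₁)) ∧
        (Ahat * (Q * Y₁) = (Q * Y₁) * ((Q * Y₁)ᵀ * Ahat * (Q * Y₁)) ∧
          (Q * Y₁)ᵀ * (Q * Y₁) = 1)) := by
    intro Y₁ Y₂
    have hWY : W * fromRows Y₁ Y₂ = fromRows (W11 * Y₁ + W12 * Y₂) (W21 * Y₁ + W22 * Y₂) := by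
      conv_lhs => rw [← fromBlocks_toBlocks W]
      rw [fromBlocks_mul_fromRows]
    have hDY : (Matrix.fromBlocks (diagonal μ) 0 0 0 :
          Matrix (Fin m ⊕ Fin (d - m)) (Fin m ⊕ Fin (d - m)) ℝ) * fromRows Y₁ Y₂ =
        fromRows (diagonal μ * Y₁) (0 : Matrix (Fin (d - m)) (Fin r) ℝ) := by
      rw [fromBlocks_mul_fromRows]
      simp
    have hS0 : (OB * fromRows Y₁ Y₂)ᵀ * A * (OB * fromRows Y₁ Y₂) =
        Y₁ᵀ * (W11 * Y₁ + W12 * Y₂) + Y₂ᵀ * (W21 * Y₁ + W22 * Y₂) := by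
      calc (OB * fromRows Y₁ Y₂)ᵀ * A * (OB * fromRows Y₁ Y₂)
          = (fromRows Y₁ Y₂)ᵀ * (W * fromRows Y₁ Y₂) := by
            rw [hW]; simp only [transpose_mul, Matrix.mul_assoc]
        _ = (fromRows Y₁ Y₂)ᵀ * fromRows (W11 * Y₁ + W12 * Y₂) (W21 * Y₁ + W22 * Y₂) := by
            rw [hWY]
        _ = Y₁ᵀ * (W11 * Y₁ + W12 * Y₂) + Y₂ᵀ * (W21 * Y₁ + W22 * Y₂) := by
            rw [transpose_fromRows, fromCols_mul_fromRows]
    have hBX0 : (OB * fromRows Y₁ Y₂)ᵀ * B * (OB * fromRows Y₁ Y₂) =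
        Y₁ᵀ * (diagonal μ * Y₁) := by
      calc (OB * fromRows Y₁ Y₂)ᵀ * B * (OB * fromRows Y₁ Y₂)
          = (fromRows Y₁ Y₂)ᵀ * ((Matrix.fromBlocks (diagonal μ) 0 0 0 :
            Matrix (Fin m ⊕ Fin (d - m)) (Fin m ⊕ Fin (d - m)) ℝ) * fromRows Y₁ Y₂) := by
            rw [hBdec]; simp only [transpose_mul, Matrix.mul_assoc]
            rw [cOB, cOB]
        _ = (fromRows Y₁ Y₂)ᵀ * fromRows (diagonal μ * Y₁) (0 : Matrix (Fin (d - m)) (Fin r) ℝ) := by rw [hDY]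
        _ = Y₁ᵀ * (diagonal μ * Y₁) := by
            rw [transpose_fromRows, fromCols_mul_fromRows, Matrix.mul_zero, add_zero]
    have hAX0 : A * (OB * fromRows Y₁ Y₂) =
        OB * fromRows (W11 * Y₁ + W12 * Y₂) (W21 * Y₁ + W22 * Y₂) := by
      rw [← hWY]
      conv_lhs => rw [hA']
      simp only [Matrix.mul_assoc]
      rw [cOB]
    have hBX1 : B * (OB * fromRows Y₁ Y₂) = OB * fromRows (diagonal μ * Y₁) (0 : Matrix (Fin (d - m)) (Fin r) ℝ) := by
      rw [← hDY]
      conv_lhs => rw [hB']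
      simp only [Matrix.mul_assoc]
      rw [cOB]
    have e1 : (A * (OB * fromRows Y₁ Y₂) =
        B * (OB * fromRows Y₁ Y₂) *
          ((OB * fromRows Y₁ Y₂)ᵀ * A * (OB * fromRows Y₁ Y₂))) ↔
        ((W11 * Y₁ + W12 * Y₂ =
            diagonal μ * Y₁ *
              (Y₁ᵀ * (W11 * Y₁ + W12 * Y₂) + Y₂ᵀ * (W21 * Y₁ + W22 * Y₂))) ∧
          (W21 * Y₁ + W22 * Y₂ = 0)) := by
      rw [hS0, hAX0, hBX1, Matrix.mul_assoc OB, fromRows_mul, Matrix.zero_mul, hiff1,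
        fromRows_ext_iff]
    have e2 : ((OB * fromRows Y₁ Y₂)ᵀ * B * (OB * fromRows Y₁ Y₂) = 1) ↔
        (Y₁ᵀ * (diagonal μ * Y₁) = 1) := by rw [hBX0]
    rw [e1, e2]
    constructor
    · rintro ⟨⟨p1, p2⟩, p3⟩
      have hY₂ : Y₂ = -(W22⁻¹ * (W21 * Y₁)) := by
        have h := congrArg (fun M => W22⁻¹ * M) p2
        simp only [Matrix.mul_add, Matrix.mul_zero] at h
        rw [cW22i] at h
        have := eq_neg_of_add_eq_zero_right h
        rw [this]
      have hW12Y2 : W11 * Y₁ + W12 * Y₂ = C * Y₁ := by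
        rw [hY₂, hCdef]
        simp only [sub_eq_add_neg, Matrix.add_mul, Matrix.neg_mul, Matrix.mul_neg, Matrix.mul_assoc]
      rw [p2, Matrix.mul_zero, add_zero, hW12Y2] at p1
      have hS'' : (Q * Y₁)ᵀ * Ahat * (Q * Y₁) = Y₁ᵀ * (C * Y₁) := by
        rw [transpose_mul, hQt]
        simp only [Matrix.mul_assoc]
        rw [hQAhatQ]
      refine ⟨hY₂, ?_, ?_⟩
      · rw [hS'', hAhatM]
        conv_lhs => rw [p1]
        simp only [Matrix.mul_assoc]
        rw [hLmuQ]
      · rw [transpose_mul, hQt]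
        simp only [Matrix.mul_assoc]
        rw [hQQM]
        exact p3
    · rintro ⟨hY₂, h1, h2⟩
      have p2 : W21 * Y₁ + W22 * Y₂ = 0 := by
        rw [hY₂, Matrix.mul_neg, cW22m, add_neg_cancel]
      have hW12Y2 : W11 * Y₁ + W12 * Y₂ = C * Y₁ := by
        rw [hY₂, hCdef]
        simp only [sub_eq_add_neg, Matrix.add_mul, Matrix.neg_mul, Matrix.mul_neg, Matrix.mul_assoc]
      have hS'' : (Q * Y₁)ᵀ * Ahat * (Q * Y₁) = Y₁ᵀ * (C * Y₁) := by
        rw [transpose_mul, hQt]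
        simp only [Matrix.mul_assoc]
        rw [hQAhatQ]
      refine ⟨⟨?_, p2⟩, ?_⟩
      · rw [p2, Matrix.mul_zero, add_zero, hW12Y2]
        rw [hS'', hAhatM] at h1
        have h := congrArg (fun M => Q * M) h1
        rw [cQL] at h
        refine h.trans ?_
        simp only [Matrix.mul_assoc]
        rw [hQQM]
      · rw [transpose_mul, hQt] at h2
        simp only [Matrix.mul_assoc] at h2
        rw [hQQM] at h2
        exact h2
  -- decompose X
  have hX : X = OB * fromRows (OBᵀ * X).toRows₁ (OBᵀ * X).toRows₂ := by
    rw [fromRows_toRows, cOB']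
  set Y₁ := (OBᵀ * X).toRows₁ with hY₁def
  set Y₂ := (OBᵀ * X).toRows₂ with hY₂def
  rw [hX, key Y₁ Y₂]
  constructor
  · rintro ⟨hY₂, hred⟩
    obtain ⟨e, Ψ, hΨ, hZeq⟩ :=
      (gev_reduced Ohat hOhat ν hν Ahat hAhatdec (Q * Y₁)).mp hred
    refine ⟨e, Ψ, hΨ, ?_⟩
    have hY₁eq : Y₁ = L * Ohat.submatrix id ⇑e * Ψ := by
      have h := congrArg (fun M => L * M) hZeq
      rw [cLQ] at h
      rw [h, Matrix.mul_assoc]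
    rw [Matrix.mul_assoc OB, fromRows_mul]
    rw [hiff1, fromRows_ext_iff]
    constructor
    · exact hY₁eq
    · rw [hY₂, hY₁eq]
      simp only [Matrix.neg_mul, Matrix.mul_assoc]
  · rintro ⟨e, Ψ, hΨ, heq⟩
    rw [Matrix.mul_assoc OB, fromRows_mul, hiff1, fromRows_ext_iff] at heq
    obtain ⟨hY₁eq, hY₂eq⟩ := heq
    have hZeq : Q * Y₁ = Ohat.submatrix id ⇑e * Ψ := by
      rw [hY₁eq]
      simp only [Matrix.mul_assoc]
      rw [cQL]
    refine ⟨?_, (gev_reduced Ohat hOhat ν hν Ahat hAhatdec (Q * Y₁)).mpr ⟨e, Ψ, hΨ, hZeq⟩⟩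
    rw [hY₂eq, hY₁eq]
    simp only [Matrix.neg_mul, Matrix.mul_assoc]
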